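/- Let t be a complex number with t ≠ 0 and t ≠ -1, and set a := (t+1)/2 and b := (t^{-1}+1)/2 (both nonzero). Then for every integer n: h_{1,n}(a) + h_{1,n}(b) = (n-1)²/2, and h_{2,n}(a) + h_{2,n}(b) = 3(t-1)²/(8t) + (n-2)²/2. -/

import Mathlib

set_option maxHeartbeats 1000000


/-- The Virasoro conformal weight
`h_{r,s}(ℓ) = ((r²-1)/4)·ℓ - (rs-1)/2 + ((s²-1)/4)·ℓ⁻¹`. -/
noncomputable def hvir (ℓ : ℂ) (r s : ℤ) : ℂ :=
  ((r : ℂ) ^ 2 - 1) / 4 * ℓ - ((r : ℂ) * (s : ℂ) - 1) / 2 + ((s : ℂ) ^ 2 - 1) / 4 * ℓ⁻¹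

/-- For `t ≠ 0, -1` and `a = (t+1)/2`, `b = (t⁻¹+1)/2`, for every integer `n`:
`h_{1,n}(a) + h_{1,n}(b) = (n-1)²/2` and
`h_{2,n}(a) + h_{2,n}(b) = 3(t-1)²/(8t) + (n-2)²/2`. -/
theorem conformal_weight_matching (t : ℂ) (ht0 : t ≠ 0) (htm1 : t ≠ -1) :
    ((t + 1) / 2 ≠ 0 ∧ (t⁻¹ + 1) / 2 ≠ 0) ∧
    ∀ n : ℤ,
      hvir ((t + 1) / 2) 1 n + hvir ((t⁻¹ + 1) / 2) 1 n = ((n : ℂ) - 1) ^ 2 / 2 ∧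
      hvir ((t + 1) / 2) 2 n + hvir ((t⁻¹ + 1) / 2) 2 n
        = 3 * (t - 1) ^ 2 / (8 * t) + ((n : ℂ) - 2) ^ 2 / 2 := by
  have ht1 : t + 1 ≠ 0 := fun h => htm1 (by linear_combination h)
  have ha : (t + 1) / 2 ≠ 0 := div_ne_zero ht1 two_ne_zero
  have hb : (t⁻¹ + 1) / 2 ≠ 0 := by
    have : t⁻¹ + 1 = (1 + t) / t := by field_simp
    rw [this]
    exact div_ne_zero (div_ne_zero (by rwa [add_comm] at ht1) ht0) two_ne_zero
  refine ⟨⟨ha, hb⟩, fun n => ?_⟩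
  have hainv : ((t + 1) / 2)⁻¹ = 2 / (t + 1) := by rw [inv_div]
  have hbinv : ((t⁻¹ + 1) / 2)⁻¹ = 2 * t / (t + 1) := by
    rw [show t⁻¹ + 1 = (t + 1) / t by field_simp; ring, div_div, inv_div]
    ring
  have h64 : t * 64 + t ^ 2 * 64 ≠ 0 := by
    intro h
    apply ht1
    have : (64 : ℂ) * t * (t + 1) = 0 := by linear_combination h
    rcases mul_eq_zero.mp this with h' | h'
    · exact absurd (by rcases mul_eq_zero.mp h' with h'' | h'' <;> [exact absurd h'' (by norm_num); exact h'']) ht0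
    · exact h'
  have e : (t * 64 + t ^ 2 * 64)⁻¹ = (64 : ℂ)⁻¹ * t⁻¹ * (t + 1)⁻¹ := by
    rw [show t * 64 + t ^ 2 * 64 = 64 * t * (t + 1) by ring, mul_inv, mul_inv]
  constructor
  · simp only [hvir, hainv, hbinv]; push_cast; field_simp; ring
  · simp only [hvir, hainv, hbinv, show t⁻¹ + 1 = (t + 1) / t by field_simp; ring]
    push_cast; field_simp; ring_nf
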